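/- arXiv:2403.05956 — 4 statements merged into one kernel-verified Lean document; each statement's English description precedes it below -/
import Mathlib

section
/- A density matrix ρ is passive with respect to a Hermitian H (i.e., Tr(ρH) ≤ Tr(UρU†H) for all unitaries U) if and only if ρ and H commute and the eigenvalues of ρ are anti-ordered with respect to those of H: on each eigenvector of H with lower energy, ρ has eigenvalue at least as large as on eigenvectors with higher energy. -/
open Matrix Complex ComplexOrder

open Finset in

lemma sum_two {d : ℕ} {j k : Fin d} (hjk : j ≠ k) (f : Fin d → ℂ)
    (hf : ∀ x, x ≠ j → x ≠ k → f x = 0) : ∑ x, f x = f j + f k := by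
  rw [← Finset.sum_subset (Finset.subset_univ ({j, k} : Finset (Fin d)))
    (fun x _ hx => by
      simp only [Finset.mem_insert, Finset.mem_singleton, not_or] at hx
      exact hf x hx.1 hx.2)]
  exact Finset.sum_pair hjk

noncomputable def givens {d : ℕ} (j k : Fin d) (c s : ℝ) (u : ℂ) :
    Matrix (Fin d) (Fin d) ℂ :=
  Matrix.of fun a b =>
    if a = j then (if b = j then (c : ℂ) else if b = k then -(s : ℂ) * (starRingEnd ℂ) u else 0)
    else if a = k then (if b = j then (s : ℂ) * u else if b = k then (c : ℂ) else 0)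
    else if a = b then 1 else 0

variable {d : ℕ} {j k : Fin d} {c s : ℝ} {u : ℂ}

lemma givens_apply_j (b : Fin d) :
    givens j k c s u j b = if b = j then (c : ℂ) else if b = k then -(s : ℂ) * (starRingEnd ℂ) u else 0 := by
  simp [givens]

lemma givens_apply_k (hjk : j ≠ k) (b : Fin d) :
    givens j k c s u k b = if b = j then (s : ℂ) * u else if b = k then (c : ℂ) else 0 := by
  simp [givens, Ne.symm hjk]

lemma givens_apply_off {a : Fin d} (haj : a ≠ j) (hak : a ≠ k) (b : Fin d) :
    givens j k c s u a b = if a = b then 1 else 0 := by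
  simp [givens, haj, hak]

lemma givens_mem (hjk : j ≠ k) (hcs : c ^ 2 + s ^ 2 = 1) (hu : u * (starRingEnd ℂ) u = 1) :
    givens j k c s u ∈ Matrix.unitaryGroup (Fin d) ℂ := by
  have hcs' : (c : ℂ) ^ 2 + (s : ℂ) ^ 2 = 1 := by exact_mod_cast hcs
  rw [Matrix.mem_unitaryGroup_iff]
  ext a b
  rw [Matrix.star_eq_conjTranspose, Matrix.mul_apply]
  simp only [conjTranspose_apply]
  by_cases haj : a = j
  · rw [haj, sum_two hjk _ (fun x hxj hxk => by
      rw [givens_apply_j, if_neg hxj, if_neg hxk, zero_mul])]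
    rw [givens_apply_j, if_pos rfl, givens_apply_j, if_neg (Ne.symm hjk), if_pos rfl]
    by_cases hbj : b = j
    · rw [hbj, givens_apply_j, if_pos rfl, givens_apply_j, if_neg (Ne.symm hjk), if_pos rfl,
        Matrix.one_apply_eq]
      simp only [Complex.star_def, _root_.map_mul, map_neg, Complex.conj_ofReal,
        Complex.conj_conj]
      calc (c:ℂ) * c + -(s:ℂ) * (starRingEnd ℂ) u * (-(s:ℂ) * u)
          = (c:ℂ)^2 + (s:ℂ)^2 * (u * (starRingEnd ℂ) u) := by ring
        _ = 1 := by rw [hu]; rw [mul_one]; exact hcs'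
    · by_cases hbk : b = k
      · rw [hbk, givens_apply_k hjk, if_pos rfl, givens_apply_k hjk, if_neg (Ne.symm hjk), if_pos rfl,
          Matrix.one_apply_ne hjk]
        simp only [Complex.star_def, _root_.map_mul, map_neg, Complex.conj_ofReal,
          Complex.conj_conj]
        ring
      · rw [givens_apply_off hbj hbk j, givens_apply_off hbj hbk k,
          if_neg hbj, if_neg hbk, Matrix.one_apply_ne (fun h : j = b => hbj h.symm)]
        simp
  · by_cases hak : a = k
    · rw [hak, sum_two hjk _ (fun x hxj hxk => by
        rw [givens_apply_k hjk, if_neg hxj, if_neg hxk, zero_mul])]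
      rw [givens_apply_k hjk, if_pos rfl, givens_apply_k hjk, if_neg (Ne.symm hjk), if_pos rfl]
      by_cases hbj : b = j
      · rw [hbj, givens_apply_j, if_pos rfl, givens_apply_j, if_neg (Ne.symm hjk), if_pos rfl,
          Matrix.one_apply_ne (Ne.symm hjk)]
        simp only [Complex.star_def, _root_.map_mul, map_neg, Complex.conj_ofReal,
          Complex.conj_conj]
        ring
      · by_cases hbk : b = k
        · rw [hbk, givens_apply_k hjk, if_pos rfl, givens_apply_k hjk, if_neg (Ne.symm hjk), if_pos rfl,
            Matrix.one_apply_eq]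
          simp only [Complex.star_def, _root_.map_mul, Complex.conj_ofReal]
          calc (s:ℂ) * u * ((s:ℂ) * (starRingEnd ℂ) u) + (c:ℂ) * c
              = (c:ℂ)^2 + (s:ℂ)^2 * (u * (starRingEnd ℂ) u) := by ring
            _ = 1 := by rw [hu, mul_one]; exact hcs'
        · rw [givens_apply_off hbj hbk j, givens_apply_off hbj hbk k,
            if_neg hbj, if_neg hbk, Matrix.one_apply_ne (fun h : k = b => hbk h.symm)]
          simp
    · rw [Finset.sum_eq_single a (fun x _ hx => by
        rw [givens_apply_off haj hak, if_neg (fun h => hx h.symm), zero_mul]) (by simp)]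
      rw [givens_apply_off haj hak, if_pos rfl, one_mul]
      by_cases hbj : b = j
      · rw [hbj, givens_apply_j, if_neg (fun h : a = j => haj h), if_neg hak,
          Matrix.one_apply_ne (hbj ▸ haj)]
        simp
      · by_cases hbk : b = k
        · rw [hbk, givens_apply_k hjk, if_neg haj, if_neg (fun h : a = k => hak h),
            Matrix.one_apply_ne (hbk ▸ hak)]
          simp
        · rw [givens_apply_off hbj hbk]
          by_cases hab : a = b
          · rw [hab, if_pos rfl, Matrix.one_apply_eq]; simp
          · rw [if_neg (fun h : b = a => hab h.symm), Matrix.one_apply_ne hab]; simp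

lemma trace_mul_diagonal (M : Matrix (Fin d) (Fin d) ℂ) (v : Fin d → ℂ) :
    (M * diagonal v).trace = ∑ a, M a a * v a := by
  simp [Matrix.trace, Matrix.diag, Matrix.mul_diagonal]

lemma givens_mulrow (hjk : j ≠ k) (σ : Matrix (Fin d) (Fin d) ℂ) (y : Fin d) :
    (givens j k c s u * σ) j y = (c : ℂ) * σ j y + (-(s:ℂ) * (starRingEnd ℂ) u) * σ k y := by
  rw [Matrix.mul_apply, sum_two hjk _ (fun x hxj hxk => by
    rw [givens_apply_j, if_neg hxj, if_neg hxk, zero_mul])]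
  rw [givens_apply_j, if_pos rfl, givens_apply_j, if_neg (Ne.symm hjk), if_pos rfl]

lemma givens_mulrow_k (hjk : j ≠ k) (σ : Matrix (Fin d) (Fin d) ℂ) (y : Fin d) :
    (givens j k c s u * σ) k y = ((s:ℂ) * u) * σ j y + (c : ℂ) * σ k y := by
  rw [Matrix.mul_apply, sum_two hjk _ (fun x hxj hxk => by
    rw [givens_apply_k hjk, if_neg hxj, if_neg hxk, zero_mul])]
  rw [givens_apply_k hjk, if_pos rfl, givens_apply_k hjk, if_neg (Ne.symm hjk), if_pos rfl]

lemma givens_sandwich_jj (hjk : j ≠ k) (σ : Matrix (Fin d) (Fin d) ℂ) :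
    (givens j k c s u * σ * (givens j k c s u)ᴴ) j j
      = ((c:ℂ) * σ j j + (-(s:ℂ) * (starRingEnd ℂ) u) * σ k j) * (c:ℂ)
        + ((c:ℂ) * σ j k + (-(s:ℂ) * (starRingEnd ℂ) u) * σ k k) * (-(s:ℂ) * u) := by
  rw [Matrix.mul_apply]
  rw [sum_two hjk _ (fun y hyj hyk => by
    simp only [conjTranspose_apply]
    rw [givens_apply_j, if_neg hyj, if_neg hyk]
    simp)]
  simp only [conjTranspose_apply]
  rw [givens_mulrow hjk, givens_mulrow hjk,
    givens_apply_j, if_pos rfl, givens_apply_j, if_neg (Ne.symm hjk), if_pos rfl]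
  simp only [Complex.star_def, _root_.map_mul, map_neg, Complex.conj_ofReal, Complex.conj_conj]

lemma givens_sandwich_kk (hjk : j ≠ k) (σ : Matrix (Fin d) (Fin d) ℂ) :
    (givens j k c s u * σ * (givens j k c s u)ᴴ) k k
      = (((s:ℂ) * u) * σ j j + (c:ℂ) * σ k j) * ((s:ℂ) * (starRingEnd ℂ) u)
        + (((s:ℂ) * u) * σ j k + (c:ℂ) * σ k k) * (c:ℂ) := by
  rw [Matrix.mul_apply]
  rw [sum_two hjk _ (fun y hyj hyk => by
    simp only [conjTranspose_apply]
    rw [givens_apply_k hjk, if_neg hyj, if_neg hyk]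
    simp)]
  simp only [conjTranspose_apply]
  rw [givens_mulrow_k hjk, givens_mulrow_k hjk,
    givens_apply_k hjk, if_pos rfl, givens_apply_k hjk, if_neg (Ne.symm hjk), if_pos rfl]
  simp only [Complex.star_def, _root_.map_mul, Complex.conj_ofReal, Complex.conj_conj]

lemma givens_sandwich_off (hjk : j ≠ k) (σ : Matrix (Fin d) (Fin d) ℂ) {a : Fin d}
    (haj : a ≠ j) (hak : a ≠ k) :
    (givens j k c s u * σ * (givens j k c s u)ᴴ) a a = σ a a := by
  have hrow : ∀ y, (givens j k c s u * σ) a y = σ a y := by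
    intro y
    rw [Matrix.mul_apply, Finset.sum_eq_single a (fun x _ hx => by
      rw [givens_apply_off haj hak, if_neg (fun h => hx h.symm), zero_mul]) (by simp)]
    rw [givens_apply_off haj hak, if_pos rfl, one_mul]
  rw [Matrix.mul_apply, Finset.sum_eq_single a (fun y _ hy => by
    simp only [conjTranspose_apply]
    rw [givens_apply_off haj hak, if_neg (fun h => hy h.symm)]
    simp) (by simp)]
  simp only [conjTranspose_apply]
  rw [hrow, givens_apply_off haj hak, if_pos rfl]
  simp

lemma givens_trace_diff (hjk : j ≠ k) (hcs : c ^ 2 + s ^ 2 = 1)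
    (hu : u * (starRingEnd ℂ) u = 1)
    (σ : Matrix (Fin d) (Fin d) ℂ) (hσ : σ.IsHermitian) (v : Fin d → ℝ) :
    ((givens j k c s u * σ * (givens j k c s u)ᴴ * diagonal (fun a => (v a : ℂ))).trace).re
      = ((σ * diagonal (fun a => (v a : ℂ))).trace).re
        + (v k - v j) * (s ^ 2 * ((σ j j).re - (σ k k).re) + 2 * c * s * (u * σ j k).re) := by
  have hcs' : (c : ℂ) ^ 2 + (s : ℂ) ^ 2 = 1 := by exact_mod_cast hcs
  have hkj : σ k j = (starRingEnd ℂ) (σ j k) := by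
    rw [← hσ.apply j k]
    simp [conjTranspose_apply, Complex.star_def]
  have hjjre : σ j j = ((σ j j).re : ℂ) := by
    have := hσ.apply j j
    simp only [conjTranspose_apply, Complex.star_def] at this
    exact (Complex.conj_eq_iff_re.mp this).symm
  have hkkre : σ k k = ((σ k k).re : ℂ) := by
    have := hσ.apply k k
    simp only [conjTranspose_apply, Complex.star_def] at this
    exact (Complex.conj_eq_iff_re.mp this).symm
  have hY : u * σ j k + (starRingEnd ℂ) u * (starRingEnd ℂ) (σ j k)
      = 2 * (((u * σ j k).re : ℝ) : ℂ) := by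
    rw [← _root_.map_mul, Complex.add_conj]
    push_cast
    ring
  have key : (givens j k c s u * σ * (givens j k c s u)ᴴ * diagonal (fun a => (v a : ℂ))).trace
      = (σ * diagonal (fun a => (v a : ℂ))).trace
        + (((v k - v j) * (s ^ 2 * ((σ j j).re - (σ k k).re) + 2 * c * s * (u * σ j k).re) : ℝ) : ℂ) := by
    rw [trace_mul_diagonal, trace_mul_diagonal]
    rw [← sub_eq_iff_eq_add']
    rw [← Finset.sum_sub_distrib]
    have : ∀ a, (givens j k c s u * σ * (givens j k c s u)ᴴ) a a * (v a : ℂ) - σ a a * (v a : ℂ)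
        = ((givens j k c s u * σ * (givens j k c s u)ᴴ) a a - σ a a) * (v a : ℂ) := by
      intro a; ring
    simp only [this]
    rw [sum_two hjk _ (fun a haj hak => by rw [givens_sandwich_off hjk σ haj hak]; ring)]
    rw [givens_sandwich_jj hjk, givens_sandwich_kk hjk, hkj]
    rw [hjjre, hkkre]
    push_cast
    simp only [Complex.ofReal_re]
    linear_combination ((v j : ℂ) * ((σ j j).re : ℂ) + (v k : ℂ) * ((σ k k).re : ℂ)) * hcs'
      + ((v j : ℂ) * (s:ℂ)^2 * ((σ k k).re : ℂ) + (v k : ℂ) * (s:ℂ)^2 * ((σ j j).re : ℂ)) * hu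
      + ((c:ℂ) * (s:ℂ) * ((v k : ℂ) - (v j : ℂ))) * hY
  rw [key, Complex.add_re, Complex.ofReal_re]

lemma diag_passive (ε : Fin d → ℝ) (hε : StrictMono ε) (c : Fin d → ℝ)
    (hanti : ∀ j k, ε j ≤ ε k → c k ≤ c j) :
    ∀ U ∈ Matrix.unitaryGroup (Fin d) ℂ,
      ((diagonal (fun a => (c a : ℂ)) * diagonal (fun a => (ε a : ℂ))).trace).re
        ≤ ((U * diagonal (fun a => (c a : ℂ)) * star U * diagonal (fun a => (ε a : ℂ))).trace).re := by
  intro U hU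
  have hc : Antitone c := by
    intro i j hij
    exact hanti i j (hε.monotone hij)
  have hUU : U * Uᴴ = 1 := by
    rw [← Matrix.star_eq_conjTranspose]; exact (Matrix.mem_unitaryGroup_iff).mp hU
  have hUU' : Uᴴ * U = 1 := by
    rw [← Matrix.star_eq_conjTranspose]; exact (Matrix.mem_unitaryGroup_iff').mp hU
  -- row sums
  have hrow : ∀ a, ∑ b, Complex.normSq (U a b) = 1 := by
    intro a
    have h1 : (U * Uᴴ) a a = 1 := by rw [hUU, Matrix.one_apply_eq]
    rw [Matrix.mul_apply] at h1
    simp only [conjTranspose_apply, Complex.star_def] at h1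
    have h2 : ∑ b, U a b * (starRingEnd ℂ) (U a b)
        = ((∑ b, Complex.normSq (U a b) : ℝ) : ℂ) := by
      push_cast
      exact Finset.sum_congr rfl fun b _ => Complex.mul_conj _
    rw [h2] at h1
    exact_mod_cast h1
  have hcol : ∀ b, ∑ a, Complex.normSq (U a b) = 1 := by
    intro b
    have h1 : (Uᴴ * U) b b = 1 := by rw [hUU', Matrix.one_apply_eq]
    rw [Matrix.mul_apply] at h1
    simp only [conjTranspose_apply, Complex.star_def] at h1
    have h2 : ∑ a, (starRingEnd ℂ) (U a b) * U a b
        = ((∑ a, Complex.normSq (U a b) : ℝ) : ℂ) := by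
      push_cast
      exact Finset.sum_congr rfl fun a _ => by rw [mul_comm]; exact Complex.mul_conj _
    rw [h2] at h1
    exact_mod_cast h1
  have hB : Matrix.of (fun a b => Complex.normSq (U a b)) ∈ doublyStochastic ℝ (Fin d) := by
    rw [mem_doublyStochastic_iff_sum]
    exact ⟨fun a b => Complex.normSq_nonneg _, hrow, hcol⟩
  -- LHS
  have hL : ((diagonal (fun a => (c a : ℂ)) * diagonal (fun a => (ε a : ℂ))).trace).re
      = ∑ a, ε a * c a := by
    rw [trace_mul_diagonal]
    have : (∑ a, (diagonal (fun a => (c a : ℂ))) a a * (ε a : ℂ))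
        = ((∑ a, ε a * c a : ℝ) : ℂ) := by
      push_cast
      exact Finset.sum_congr rfl fun a _ => by rw [Matrix.diagonal_apply_eq]; ring
    rw [this, Complex.ofReal_re]
  -- RHS
  have hentry : ∀ a, (U * diagonal (fun x => (c x : ℂ)) * Uᴴ) a a
      = ((∑ b, Complex.normSq (U a b) * c b : ℝ) : ℂ) := by
    intro a
    rw [Matrix.mul_apply]
    simp only [conjTranspose_apply, Complex.star_def, Matrix.mul_diagonal]
    push_cast
    refine Finset.sum_congr rfl fun y _ => ?_
    rw [mul_comm (U a y) ((c y : ℂ)), mul_assoc, Complex.mul_conj]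
    ring
  have hR : ((U * diagonal (fun a => (c a : ℂ)) * star U * diagonal (fun a => (ε a : ℂ))).trace).re
      = ∑ a, (∑ b, Complex.normSq (U a b) * c b) * ε a := by
    rw [Matrix.star_eq_conjTranspose, trace_mul_diagonal]
    have : (∑ a, (U * diagonal (fun x => (c x : ℂ)) * Uᴴ) a a * (ε a : ℂ))
        = ((∑ a, (∑ b, Complex.normSq (U a b) * c b) * ε a : ℝ) : ℂ) := by
      push_cast
      exact Finset.sum_congr rfl fun a _ => by rw [hentry a]; push_cast; ring
    rw [this, Complex.ofReal_re]
  rw [hL, hR]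
  calc ∑ a, ε a * c a
      ≤ ∑ a, ∑ b, (Matrix.of (fun a b => Complex.normSq (U a b))) a b * (ε a * c b) := by
        have hlin : IsLinearMap ℝ (fun M : Matrix (Fin d) (Fin d) ℝ =>
            ∑ a, ∑ b, M a b * (ε a * c b)) := by
          constructor
          · intro M N
            simp [add_mul, Finset.sum_add_distrib]
          · intro r M
            simp [Finset.mul_sum, mul_assoc]
        have hconv : Convex ℝ {M : Matrix (Fin d) (Fin d) ℝ |
            ∑ a, ε a * c a ≤ ∑ a, ∑ b, M a b * (ε a * c b)} := convex_halfSpace_ge hlin _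
        have hav : Antivary ε c := by
          intro i j hij
          exact hε.monotone (le_of_not_gt fun hji => absurd (hc hji.le) (not_le.2 hij))
        have hperm : {σ.permMatrix ℝ | σ : Equiv.Perm (Fin d)} ⊆ {M : Matrix (Fin d) (Fin d) ℝ |
            ∑ a, ε a * c a ≤ ∑ a, ∑ b, M a b * (ε a * c b)} := by
          rintro M ⟨π, rfl⟩
          have h1 : ∀ a : Fin d, ∑ b, (π.permMatrix ℝ) a b * (ε a * c b) = ε a * c (π a) := by
            intro a
            rw [Finset.sum_eq_single (π a)]
            · simp [Equiv.Perm.permMatrix, PEquiv.toMatrix_apply, Equiv.toPEquiv_apply]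
            · intro b _ hb
              simp [Equiv.Perm.permMatrix, PEquiv.toMatrix_apply, Equiv.toPEquiv_apply, hb.symm]
            · simp
          simp only [Set.mem_setOf_eq, h1]
          simpa [smul_eq_mul] using hav.sum_smul_le_sum_smul_comp_perm (σ := π)
        have hBhull : Matrix.of (fun a b => Complex.normSq (U a b))
            ∈ convexHull ℝ {σ.permMatrix ℝ | σ : Equiv.Perm (Fin d)} := by
          rw [← doublyStochastic_eq_convexHull_permMatrix]; exact hB
        exact convexHull_min hperm hconv hBhull
    _ = ∑ a, (∑ b, Complex.normSq (U a b) * c b) * ε a := by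
        refine Finset.sum_congr rfl fun a _ => ?_
        rw [Finset.sum_mul]
        exact Finset.sum_congr rfl fun b _ => by simp [Matrix.of_apply]; ring

lemma diag_case {d : ℕ} (ε : Fin d → ℝ) (hε : StrictMono ε)
    (σ : Matrix (Fin d) (Fin d) ℂ) (hσ : σ.PosSemidef)
    (P : ∀ U ∈ Matrix.unitaryGroup (Fin d) ℂ,
        ((σ * diagonal (fun a => (ε a : ℂ))).trace).re
          ≤ ((U * σ * star U * diagonal (fun a => (ε a : ℂ))).trace).re) :
    ∃ c : Fin d → ℝ, σ = diagonal (fun a => (c a : ℂ)) ∧ ∀ j k, ε j ≤ ε k → c k ≤ c j := by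
  have hH := hσ.isHermitian
  have stepA : ∀ j k : Fin d, j < k → (σ k k).re ≤ (σ j j).re := by
    intro j k hjk
    have hmem := givens_mem (j := j) (k := k) (c := 0) (s := 1) (u := 1) hjk.ne
      (by norm_num) (by simp)
    have hP := P _ hmem
    rw [Matrix.star_eq_conjTranspose,
      givens_trace_diff hjk.ne (by norm_num) (by simp) σ hH ε] at hP
    have hεjk : 0 < ε k - ε j := sub_pos.mpr (hε hjk)
    by_contra hcon
    push_neg at hcon
    nlinarith [hP, hεjk]
  have stepB : ∀ j k : Fin d, j < k → σ j k = 0 := by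
    intro j k hjk
    by_contra hz
    set A := (σ j j).re - (σ k k).re with hAdef
    have hA0 : 0 ≤ A := sub_nonneg.mpr (stepA j k hjk)
    set b := ‖σ j k‖ with hbdef
    have hb0 : 0 < b := norm_pos_iff.mpr hz
    set r := Real.sqrt ((A + b) ^ 2 + b ^ 2) with hrdef
    have hr2 : r ^ 2 = (A + b) ^ 2 + b ^ 2 := Real.sq_sqrt (by positivity)
    have hr0 : 0 < r := Real.sqrt_pos.mpr (by positivity)
    set cc := (A + b) / r with hccdef
    set ss := b / r with hssdef
    have hcs : cc ^ 2 + ss ^ 2 = 1 := by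
      rw [hccdef, hssdef, div_pow, div_pow, ← add_div, hr2, div_self (by positivity)]
    set u := -((starRingEnd ℂ) (σ j k)) / (b : ℂ) with hudef
    have hbC : ((b : ℝ) : ℂ) ≠ 0 := by exact_mod_cast hb0.ne'
    have hzz : σ j k * (starRingEnd ℂ) (σ j k) = ((b : ℝ) : ℂ) ^ 2 := by
      rw [Complex.mul_conj, hbdef]
      norm_cast
      exact (Complex.sq_norm _).symm
    have hcu : (starRingEnd ℂ) u = -(σ j k) / (b : ℂ) := by
      rw [hudef]
      simp [map_div₀, Complex.conj_conj, Complex.conj_ofReal]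
    have hu : u * (starRingEnd ℂ) u = 1 := by
      rw [hcu, hudef]
      field_simp
      push_cast
      linear_combination hzz
    have hux : (u * σ j k).re = -b := by
      have h1 : u * σ j k = ((-b : ℝ) : ℂ) := by
        rw [hudef]
        field_simp
        push_cast
        linear_combination (-1 : ℂ) * hzz
      rw [h1, Complex.ofReal_re]
    have hmem := givens_mem hjk.ne hcs hu
    have hP := P _ hmem
    rw [Matrix.star_eq_conjTranspose, givens_trace_diff hjk.ne hcs hu σ hH ε, hux] at hP
    have hεjk : 0 < ε k - ε j := sub_pos.mpr (hε hjk)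
    have hneg : ss ^ 2 * ((σ j j).re - (σ k k).re) + 2 * cc * ss * (-b) < 0 := by
      have heq : ss ^ 2 * ((σ j j).re - (σ k k).re) + 2 * cc * ss * (-b)
          = -(b ^ 2 * (A + 2 * b)) / r ^ 2 := by
        rw [hssdef, hccdef, ← hAdef]
        field_simp
        ring
      rw [heq]
      apply div_neg_of_neg_of_pos
      · have h1 : 0 < A + 2 * b := by linarith
        have h2 : 0 < b ^ 2 * (A + 2 * b) := mul_pos (pow_pos hb0 2) h1
        linarith
      · positivity
    nlinarith [hP, hεjk, hneg, mul_pos hεjk (neg_pos.mpr hneg)]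
  have offdiag : ∀ j k : Fin d, j ≠ k → σ j k = 0 := by
    intro j k hjk
    rcases lt_or_gt_of_ne hjk with h | h
    · exact stepB j k h
    · have h0 := stepB k j h
      have := hH.apply j k
      rw [← this, h0, star_zero]
  refine ⟨fun a => (σ a a).re, ?_, ?_⟩
  · ext a b
    by_cases hab : a = b
    · subst hab
      rw [Matrix.diagonal_apply_eq]
      have := hH.apply a a
      simp only [conjTranspose_apply, Complex.star_def] at this
      exact ((Complex.conj_eq_iff_re.mp this).symm).symm ▸ (Complex.conj_eq_iff_re.mp this).symm
    · rw [Matrix.diagonal_apply_ne _ hab]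
      exact offdiag a b hab
  · intro j k hjk
    by_cases h : j = k
    · subst h; exact le_refl _
    · have hlt : j < k := by
        rcases lt_or_gt_of_ne h with h' | h'
        · exact h'
        · exact absurd (hε h') (not_lt.mpr hjk)
      exact stepA j k hlt

/-- A density matrix `ρ` is passive with respect to a Hermitian `H`
with non-degenerate spectrum (eigenvalues `ε` strictly increasing, eigenvectors `w k`)
iff `ρ` commutes with `H` and the eigenvalues of `ρ` on the eigenvectors of `H`
are anti-ordered: lower energy eigenvectors carry eigenvalues of `ρ` at least as large. -/
theorem passive_iff_commute_antiordered {d : ℕ}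
    (w : Fin d → (Fin d → ℂ))
    (hw : ∀ i j, star (w i) ⬝ᵥ w j = if i = j then 1 else 0)
    (ε : Fin d → ℝ) (hε : StrictMono ε)
    (H : Matrix (Fin d) (Fin d) ℂ)
    (hH : H = ∑ k, ((ε k : ℂ)) • vecMulVec (w k) (star (w k)))
    (ρ : Matrix (Fin d) (Fin d) ℂ) (hρ : ρ.PosSemidef) (htr : ρ.trace = 1) :
    (∀ U ∈ Matrix.unitaryGroup (Fin d) ℂ,
        ((ρ * H).trace).re ≤ ((U * ρ * star U * H).trace).re)
    ↔ (ρ * H = H * ρ ∧ ∃ c : Fin d → ℝ,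
        (∀ k, ρ.mulVec (w k) = (c k : ℂ) • w k) ∧
        (∀ j k, ε j ≤ ε k → c k ≤ c j)) := by
  set D : Matrix (Fin d) (Fin d) ℂ := diagonal (fun a => (ε a : ℂ)) with hD
  set W : Matrix (Fin d) (Fin d) ℂ := Matrix.of (fun i k => w k i) with hWdef
  have hWunit : Wᴴ * W = 1 := by
    ext i j
    rw [Matrix.mul_apply, Matrix.one_apply]
    have := hw i j
    rw [dotProduct] at this
    simp only [conjTranspose_apply, hWdef, Matrix.of_apply]
    simpa using this
  have hWmem : W ∈ Matrix.unitaryGroup (Fin d) ℂ := by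
    rw [Matrix.mem_unitaryGroup_iff', Matrix.star_eq_conjTranspose]
    exact hWunit
  have hWW : W * Wᴴ = 1 := by
    have := Matrix.mem_unitaryGroup_iff.mp hWmem
    rwa [Matrix.star_eq_conjTranspose] at this
  have hWHmem : Wᴴ ∈ Matrix.unitaryGroup (Fin d) ℂ := by
    rw [← Matrix.star_eq_conjTranspose]
    exact Unitary.star_mem hWmem
  have hHW : H = W * D * Wᴴ := by
    rw [hH]
    ext a b
    rw [Matrix.mul_apply]
    simp only [Matrix.sum_apply, Matrix.smul_apply, vecMulVec_apply, Pi.star_apply,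
      smul_eq_mul, Matrix.mul_diagonal, conjTranspose_apply, hWdef, hD, Matrix.of_apply]
    exact Finset.sum_congr rfl fun y _ => by ring
  set σ : Matrix (Fin d) (Fin d) ℂ := Wᴴ * ρ * W with hσdef
  have hσpsd : σ.PosSemidef := hρ.conjTranspose_mul_mul_same W
  have hρW : ρ = W * σ * Wᴴ := by
    calc ρ = (W * Wᴴ) * ρ * (W * Wᴴ) := by rw [hWW, one_mul, mul_one]
    _ = W * σ * Wᴴ := by rw [hσdef]; simp only [Matrix.mul_assoc]
  have hWHW : Wᴴ * H * W = D := by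
    rw [hHW]
    calc Wᴴ * (W * D * Wᴴ) * W = (Wᴴ * W) * D * (Wᴴ * W) := by simp only [Matrix.mul_assoc]
    _ = D := by rw [hWunit, one_mul, mul_one]
  have htrbase : (ρ * H).trace = (σ * D).trace := by
    rw [hHW, hσdef]
    calc (ρ * (W * D * Wᴴ)).trace = ((ρ * W * D) * Wᴴ).trace := by simp only [Matrix.mul_assoc]
    _ = (Wᴴ * (ρ * W * D)).trace := Matrix.trace_mul_comm _ _
    _ = (Wᴴ * ρ * W * D).trace := by simp only [Matrix.mul_assoc]
  have htrconj : ∀ V : Matrix (Fin d) (Fin d) ℂ,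
      ((W * V * Wᴴ) * ρ * star (W * V * Wᴴ) * H).trace = (V * σ * star V * D).trace := by
    intro V
    have hstar : star (W * V * Wᴴ) = W * Vᴴ * Wᴴ := by
      simp only [Matrix.star_eq_conjTranspose, conjTranspose_mul, conjTranspose_conjTranspose]
      simp only [Matrix.mul_assoc]
    rw [hstar, Matrix.star_eq_conjTranspose]
    have he : (W * V * Wᴴ) * ρ * (W * Vᴴ * Wᴴ) * H = W * (V * σ * Vᴴ * (Wᴴ * H)) := by
      rw [hσdef]
      simp only [Matrix.mul_assoc]
    rw [he, Matrix.trace_mul_comm]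
    have he2 : V * σ * Vᴴ * (Wᴴ * H) * W = V * σ * Vᴴ * D := by
      rw [← hWHW]
      simp only [Matrix.mul_assoc]
    rw [he2]
  have heig : ∀ c : Fin d → ℝ,
      ((∀ k, ρ.mulVec (w k) = (c k : ℂ) • w k) ↔ σ = diagonal (fun a => (c a : ℂ))) := by
    intro c
    have h1 : (∀ k, ρ.mulVec (w k) = (c k : ℂ) • w k)
        ↔ ρ * W = W * diagonal (fun a => (c a : ℂ)) := by
      constructor
      · intro h
        ext i kk
        rw [Matrix.mul_apply, Matrix.mul_diagonal]
        have := congrFun (h kk) i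
        rw [Matrix.mulVec, dotProduct] at this
        simp only [Pi.smul_apply, smul_eq_mul] at this
        simpa [hWdef, Matrix.of_apply, mul_comm] using this
      · intro h
        intro kk
        funext i
        have := congrFun (congrFun h i) kk
        rw [Matrix.mul_apply, Matrix.mul_diagonal] at this
        simp only [hWdef, Matrix.of_apply] at this
        simp only [Pi.smul_apply, smul_eq_mul]
        rw [Matrix.mulVec, dotProduct]
        rw [mul_comm] at this
        simpa using this
    rw [h1]
    constructor
    · intro h
      rw [hσdef]
      calc Wᴴ * ρ * W = Wᴴ * (ρ * W) := by rw [Matrix.mul_assoc]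
      _ = Wᴴ * (W * diagonal (fun a => (c a : ℂ))) := by rw [h]
      _ = diagonal (fun a => (c a : ℂ)) := by rw [← Matrix.mul_assoc, hWunit, one_mul]
    · intro h
      calc ρ * W = W * σ * (Wᴴ * W) := by rw [hρW]; simp only [Matrix.mul_assoc]
      _ = W * diagonal (fun a => (c a : ℂ)) := by rw [hWunit, mul_one, h]
  constructor
  · intro Pρ
    have Pσ : ∀ V ∈ Matrix.unitaryGroup (Fin d) ℂ,
        ((σ * D).trace).re ≤ ((V * σ * star V * D).trace).re := by
      intro V hV
      have hUmem : W * V * Wᴴ ∈ Matrix.unitaryGroup (Fin d) ℂ :=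
        mul_mem (mul_mem hWmem hV) hWHmem
      have := Pρ _ hUmem
      rwa [htrbase, htrconj V] at this
    obtain ⟨c, hdiag, hanti⟩ := diag_case ε hε σ hσpsd Pσ
    have hcomm : ρ * H = H * ρ := by
      rw [hρW, hHW, hdiag]
      calc W * diagonal (fun a => (c a : ℂ)) * Wᴴ * (W * D * Wᴴ)
          = W * (diagonal (fun a => (c a : ℂ)) * (Wᴴ * W) * D) * Wᴴ := by
            simp only [Matrix.mul_assoc]
      _ = W * (diagonal (fun a => (c a : ℂ)) * D) * Wᴴ := by rw [hWunit]; rw [mul_one]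
      _ = W * (D * diagonal (fun a => (c a : ℂ))) * Wᴴ := by
            have hcm : (fun i => (c i : ℂ) * (ε i : ℂ)) = (fun i => (ε i : ℂ) * (c i : ℂ)) :=
              funext fun i => mul_comm _ _
            rw [hD, Matrix.diagonal_mul_diagonal, Matrix.diagonal_mul_diagonal, hcm]
      _ = W * (D * (Wᴴ * W) * diagonal (fun a => (c a : ℂ))) * Wᴴ := by
            rw [hWunit]; rw [mul_one]
      _ = W * D * Wᴴ * (W * diagonal (fun a => (c a : ℂ)) * Wᴴ) := by
            simp only [Matrix.mul_assoc]
    exact ⟨hcomm, c, (heig c).mpr hdiag, hanti⟩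
  · rintro ⟨-, c, hc, hanti⟩
    have hdiag : σ = diagonal (fun a => (c a : ℂ)) := (heig c).mp hc
    intro U hU
    have hV : Wᴴ * U * W ∈ Matrix.unitaryGroup (Fin d) ℂ :=
      mul_mem (mul_mem hWHmem hU) hWmem
    have hP := diag_passive ε hε c hanti _ hV
    rw [← hdiag] at hP
    have hWVW : W * (Wᴴ * U * W) * Wᴴ = U := by
      calc W * (Wᴴ * U * W) * Wᴴ = (W * Wᴴ) * U * (W * Wᴴ) := by simp only [Matrix.mul_assoc]
      _ = U := by rw [hWW, one_mul, mul_one]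
    have hc2 := htrconj (Wᴴ * U * W)
    rw [hWVW] at hc2
    rw [← hD] at hP
    rw [htrbase, hc2]
    exact hP
end

section
/- Let U(t) = exp(−i(ω/2) t n̂·σ) with n̂ = (sin φ₀, −cos φ₀, 0) and let ρ be the qubit state with Bloch vector (r sin θ₀ cos φ₀, r sin θ₀ sin φ₀, r cos θ₀). Then with H = |1⟩⟨1|, the extracted work W(t) = Tr(Hρ) − Tr(H U(t)ρU(t)†) equals r sin(ωt/2) sin(θ₀ − ωt/2). -/
open Matrix Complex Real

lemma exp_offdiag (a b z : ℂ) (hab : a * b = 1) :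
    NormedSpace.exp (z • !![(0:ℂ), a; b, 0]) =
      !![Complex.cosh z, a * Complex.sinh z; b * Complex.sinh z, Complex.cosh z] := by
  have hV : (!![a, a; (1:ℂ), -1]) * (!![b/2, 1/2; b/2, -(1/2)]) = 1 := by
    ext i j
    fin_cases i <;> fin_cases j <;>
      simp [Matrix.mul_apply, Fin.sum_univ_two] <;>
      first
      | ring1
      | (linear_combination hab)
      | (linear_combination hab / 2)
  have hW : (!![b/2, 1/2; b/2, -(1/2)]) * (!![a, a; (1:ℂ), -1]) = 1 := by
    ext i j
    fin_cases i <;> fin_cases j <;>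
      simp [Matrix.mul_apply, Fin.sum_univ_two] <;>
      first
      | ring1
      | (linear_combination hab)
      | (linear_combination hab / 2)
  set Vu : (Matrix (Fin 2) (Fin 2) ℂ)ˣ := ⟨!![a, a; (1:ℂ), -1], !![b/2, 1/2; b/2, -(1/2)], hV, hW⟩
  have hD : (Matrix.diagonal ![z, -z]) = !![z, 0; 0, -z] := by
    ext i j; fin_cases i <;> fin_cases j <;> simp [Matrix.diagonal]
  have hconj : z • !![(0:ℂ), a; b, 0] = (Vu : Matrix (Fin 2) (Fin 2) ℂ) * (Matrix.diagonal ![z, -z]) * ((Vu⁻¹ : (Matrix (Fin 2) (Fin 2) ℂ)ˣ) : Matrix (Fin 2) (Fin 2) ℂ) := by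
    show _ = !![a, a; (1:ℂ), -1] * _ * !![b/2, 1/2; b/2, -(1/2)]
    rw [hD]
    ext i j
    fin_cases i <;> fin_cases j <;>
      simp [Matrix.mul_apply, Fin.sum_univ_two] <;> ring
  rw [hconj, Matrix.exp_units_conj, Matrix.exp_diagonal, Pi.exp_def]
  show !![a, a; (1:ℂ), -1] * _ * !![b/2, 1/2; b/2, -(1/2)] = _
  have hD2 : (Matrix.diagonal fun i => NormedSpace.exp (![z, -z] i))
      = !![Complex.exp z, 0; 0, Complex.exp (-z)] := by
    ext i j; fin_cases i <;> fin_cases j <;>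
      simp [Matrix.diagonal, ← Complex.exp_eq_exp_ℂ]
  rw [hD2]
  ext i j
  fin_cases i <;> fin_cases j <;>
    simp [Matrix.mul_apply, Fin.sum_univ_two, Complex.cosh, Complex.sinh] <;>
    first
      | ring1
      | (linear_combination ((Complex.exp z + Complex.exp (-z))/2) * hab)
      | (linear_combination ((Complex.exp z - Complex.exp (-z))/2) * hab)
      | (linear_combination ((Complex.exp (-z) - Complex.exp z)/2) * hab)


/-- For the geodesic drive `U(t) = exp(−i(ω/2)t n̂·σ)` with
`n̂ = (sin φ₀, −cos φ₀, 0)` applied to the qubit state with Bloch vector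
`(r sin θ₀ cos φ₀, r sin θ₀ sin φ₀, r cos θ₀)` and `H = |1⟩⟨1|`, the extracted
work is `W(t) = Tr(Hρ) − Tr(H U(t)ρU(t)†) = r sin(ωt/2) sin(θ₀ − ωt/2)`. -/
theorem geodesic_work_formula (r θ₀ φ₀ ω t : ℝ) (hω : 0 < ω)
    (sx sy sz ρ H : Matrix (Fin 2) (Fin 2) ℂ)
    (hsx : sx = !![0, 1; 1, 0]) (hsy : sy = !![0, -Complex.I; Complex.I, 0])
    (hsz : sz = !![1, 0; 0, -1])
    (hρ : ρ = ((1/2 : ℝ) : ℂ) • ((1 : Matrix (Fin 2) (Fin 2) ℂ)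
        + ((r * Real.sin θ₀ * Real.cos φ₀ : ℝ) : ℂ) • sx
        + ((r * Real.sin θ₀ * Real.sin φ₀ : ℝ) : ℂ) • sy
        + ((r * Real.cos θ₀ : ℝ) : ℂ) • sz))
    (hH : H = !![0, 0; 0, 1])
    (U : Matrix (Fin 2) (Fin 2) ℂ)
    (hU : U = NormedSpace.exp ((-(Complex.I) * ((ω/2 * t : ℝ) : ℂ)) •
        (((Real.sin φ₀ : ℝ) : ℂ) • sx - ((Real.cos φ₀ : ℝ) : ℂ) • sy))) :
    (H * ρ).trace - (H * (U * ρ * star U)).trace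
      = ((r * Real.sin (ω * t / 2) * Real.sin (θ₀ - ω * t / 2) : ℝ) : ℂ) := by
  set c : ℝ := ω / 2 * t with hc
  set a : ℂ := (Real.sin φ₀ : ℂ) + Complex.I * (Real.cos φ₀ : ℂ) with ha
  set b : ℂ := (Real.sin φ₀ : ℂ) - Complex.I * (Real.cos φ₀ : ℂ) with hb
  have hab : a * b = 1 := by
    have h := Real.sin_sq_add_cos_sq φ₀
    have h' : ((Real.sin φ₀ : ℂ))^2 + ((Real.cos φ₀ : ℂ))^2 = 1 := by
      exact_mod_cast congrArg (Complex.ofReal) h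
    rw [ha, hb]
    linear_combination h' - Complex.I_sq * ((Real.cos φ₀:ℂ))^2
  have hM : (((Real.sin φ₀ : ℝ) : ℂ) • sx - ((Real.cos φ₀ : ℝ) : ℂ) • sy)
      = !![(0:ℂ), a; b, 0] := by
    rw [hsx, hsy]; ext i j; fin_cases i <;> fin_cases j <;> simp [ha, hb] <;> ring
  have hUex : U = !![Complex.cosh (-(Complex.I) * (c:ℂ)),
      a * Complex.sinh (-(Complex.I) * (c:ℂ));
      b * Complex.sinh (-(Complex.I) * (c:ℂ)), Complex.cosh (-(Complex.I) * (c:ℂ))] := by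
    rw [hU, hM, exp_offdiag a b _ hab]
  have hch : Complex.cosh (-(Complex.I) * (c:ℂ)) = (Real.cos c : ℂ) := by
    rw [show (-(Complex.I) * (c:ℂ)) = ((-c : ℝ) : ℂ) * Complex.I by push_cast; ring,
      Complex.cosh_mul_I, ← Complex.ofReal_cos, Real.cos_neg]
  have hsh : Complex.sinh (-(Complex.I) * (c:ℂ)) = -(Real.sin c : ℂ) * Complex.I := by
    rw [show (-(Complex.I) * (c:ℂ)) = ((-c : ℝ) : ℂ) * Complex.I by push_cast; ring,
      Complex.sinh_mul_I, ← Complex.ofReal_sin, Real.sin_neg]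
    push_cast
    ring
  rw [hch, hsh] at hUex
  have hstar : star U = !![(Real.cos c : ℂ), (Real.sin c : ℂ) * Complex.I * a;
      (Real.sin c : ℂ) * Complex.I * b, (Real.cos c : ℂ)] := by
    rw [hUex]
    ext i j
    fin_cases i <;> fin_cases j <;>
      simp [Matrix.star_apply, ha, hb, Complex.ext_iff] <;> constructor <;> first | trivial | ring1
  have hρex : ρ = !![(((1 + r*Real.cos θ₀)/2 : ℝ) : ℂ),
      ((r*Real.sin θ₀*Real.cos φ₀/2 : ℝ) : ℂ) - ((r*Real.sin θ₀*Real.sin φ₀/2 : ℝ) : ℂ) * Complex.I;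
      ((r*Real.sin θ₀*Real.cos φ₀/2 : ℝ) : ℂ) + ((r*Real.sin θ₀*Real.sin φ₀/2 : ℝ) : ℂ) * Complex.I,
      (((1 - r*Real.cos θ₀)/2 : ℝ) : ℂ)] := by
    rw [hρ, hsx, hsy, hsz]
    ext i j
    fin_cases i <;> fin_cases j <;>
      simp [Matrix.one_apply] <;> push_cast <;> ring
  rw [hρex, hH, hstar, hUex]
  rw [show ω * t / 2 = c by rw [hc]; ring, Real.sin_sub]
  simp only [Matrix.mul_fin_two, Matrix.trace_fin_two_of, ha, hb]
  push_cast
  have h1 : Complex.sin (φ₀:ℂ) ^ 2 + Complex.cos (φ₀:ℂ) ^ 2 = 1 := Complex.sin_sq_add_cos_sq _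
  have h2 : Complex.sin (c:ℂ) ^ 2 + Complex.cos (c:ℂ) ^ 2 = 1 := Complex.sin_sq_add_cos_sq _
  have h3 : (Complex.I) ^ 2 = -1 := Complex.I_sq
  set S := Complex.sin (φ₀:ℂ)
  set C := Complex.cos (φ₀:ℂ)
  set s := Complex.sin (c:ℂ)
  set cc := Complex.cos (c:ℂ)
  set St := Complex.sin (θ₀:ℂ)
  set Ct := Complex.cos (θ₀:ℂ)
  set rr := (r:ℂ)
  set j := Complex.I
  linear_combination
    (-(s*cc*St*rr*j^2) + s^2*j^2/2 + s^2*Ct*rr*j^2/2) * h1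
    + (j^2/2 + Ct*rr + Ct*rr*j^2/2 - C^2*j^2/2 - C^2*j^4/2 - C^2*Ct*rr*j^2/2 - C^2*Ct*rr*j^4/2) * h2
    + (1/2 + Ct*rr/2 - cc^2/2 - cc^2*Ct*rr/2 - s*cc*St*rr - C^2*j^2/2 - C^2*Ct*rr*j^2/2
        + C^2*cc^2*j^2/2 + C^2*cc^2*Ct*rr*j^2/2) * h3
end

section
/- Let g : [0, s₀] → [0,1] be continuous with g(s) < 1 for s < s₀, g(s₀) = 1, and 1 − g(s) ≤ C(s₀ − s) near s₀ for some C > 0. Then the ODE ds/dt = 1 − exp(−ζ(1 − g(s))) with s(0) = 0 and ζ > 0 has a solution satisfying s(t) < s₀ for all t ≥ 0 and s(t) → s₀ as t → ∞. -/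
open Real Filter MeasureTheory intervalIntegral

/-- abstract slowdown lemma: If `g : [0,s₀] → [0,1]` is continuous with
`g < 1` on `[0,s₀)`, `g(s₀) = 1`, and `1 − g(x) ≤ C(s₀ − x)` near `s₀`, then the ODE
`ds/dt = 1 − exp(−ζ(1 − g(s)))`, `s(0) = 0`, has a solution with `s(t) < s₀` for all
`t ≥ 0` and `s(t) → s₀` as `t → ∞`. -/
theorem slowdown_lemma (s₀ ζ C : ℝ) (hs₀ : 0 < s₀) (hζ : 0 < ζ) (hC : 0 < C)
    (g : ℝ → ℝ) (hg : Continuous g)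
    (hrange : ∀ x ∈ Set.Icc (0:ℝ) s₀, g x ∈ Set.Icc (0:ℝ) 1)
    (hlt : ∀ x ∈ Set.Ico (0:ℝ) s₀, g x < 1) (hend : g s₀ = 1)
    (hnear : ∃ δ > 0, ∀ x ∈ Set.Icc (s₀ - δ) s₀, 1 - g x ≤ C * (s₀ - x)) :
    ∃ s : ℝ → ℝ, s 0 = 0 ∧
      (∀ t : ℝ, 0 ≤ t → HasDerivAt s (1 - Real.exp (-ζ * (1 - g (s t)))) t) ∧
      (∀ t : ℝ, 0 ≤ t → s t < s₀) ∧
      Filter.Tendsto s Filter.atTop (nhds s₀) := by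
  obtain ⟨δ₀, hδ₀, hnear'⟩ := hnear
  set δ : ℝ := min δ₀ (s₀ / 2) with hδdef
  have hδpos : 0 < δ := lt_min hδ₀ (by positivity)
  have hδle : δ ≤ s₀ / 2 := min_le_right _ _
  set a : ℝ := s₀ - δ with hadef
  have ha0 : 0 < a := by simp only [hadef]; linarith
  have halt : a < s₀ := by simp only [hadef]; linarith
  -- the velocity field (extended to negative s)
  set f : ℝ → ℝ := fun u => 1 - Real.exp (-ζ * (1 - g (max u 0))) with hfdef
  have hfc : Continuous f := by
    apply Continuous.sub continuous_const
    exact Real.continuous_exp.comp (by continuity)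
  have hfpos : ∀ u < s₀, 0 < f u := by
    intro u hu
    have hmem : max u 0 ∈ Set.Ico (0:ℝ) s₀ := by
      constructor
      · exact le_max_right _ _
      · rcases le_or_gt u 0 with h | h
        · rw [max_eq_right h]; exact hs₀
        · rw [max_eq_left h.le]; exact hu
    have h1 : g (max u 0) < 1 := hlt _ hmem
    have h2 : -ζ * (1 - g (max u 0)) < 0 := by nlinarith
    have := Real.exp_lt_one_iff.mpr h2
    simp only [hfdef]; linarith
  -- upper bound for f near s₀
  have hfub : ∀ u ∈ Set.Ico a s₀, f u ≤ ζ * C * (s₀ - u) := by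
    intro u hu
    have hu0 : 0 ≤ u := le_trans ha0.le hu.1
    have hmax : max u 0 = u := max_eq_left hu0
    have hgu : g u ≤ 1 := (hrange u ⟨hu0, hu.2.le⟩).2
    have hnearu : 1 - g u ≤ C * (s₀ - u) := by
      apply hnear' u ⟨?_, hu.2.le⟩
      have : s₀ - δ₀ ≤ a := by simp only [hadef]; have := min_le_left δ₀ (s₀/2); linarith
      linarith [hu.1]
    have hx0 : 0 ≤ ζ * (1 - g u) := by nlinarith
    have hexp : 1 - Real.exp (-(ζ * (1 - g u))) ≤ ζ * (1 - g u) := by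
      have := Real.add_one_le_exp (-(ζ * (1 - g u)))
      linarith
    calc f u = 1 - Real.exp (-(ζ * (1 - g u))) := by
          simp only [hfdef, hmax]; ring_nf
      _ ≤ ζ * (1 - g u) := hexp
      _ ≤ ζ * (C * (s₀ - u)) := by
          exact mul_le_mul_of_nonneg_left hnearu hζ.le
      _ = ζ * C * (s₀ - u) := by ring
  -- the "time" function
  set F : ℝ → ℝ := fun x => ∫ u in (0:ℝ)..x, (f u)⁻¹ with hFdef
  have hcontOn : ContinuousOn (fun u => (f u)⁻¹) (Set.Iio s₀) :=
    ContinuousOn.inv₀ hfc.continuousOn fun u hu => (hfpos u hu).ne'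
  have hintg : ∀ x y : ℝ, x < s₀ → y < s₀ →
      IntervalIntegrable (fun u => (f u)⁻¹) volume x y := by
    intro x y hx hy
    apply (hcontOn.mono ?_).intervalIntegrable
    intro u hu
    rcases le_total x y with h | h
    · rw [Set.uIcc_of_le h] at hu; exact lt_of_le_of_lt hu.2 hy
    · rw [Set.uIcc_of_ge h] at hu; exact lt_of_le_of_lt hu.2 hx
  have hFadd : ∀ x y : ℝ, x < s₀ → y < s₀ →
      F y = F x + ∫ u in x..y, (f u)⁻¹ := by
    intro x y hx hy
    have := intervalIntegral.integral_add_adjacent_intervals (hintg 0 x hs₀ hx)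
      (hintg x y hx hy)
    simp only [hFdef]; linarith
  have hFderiv : ∀ x < s₀, HasDerivAt F (f x)⁻¹ x := by
    intro x hx
    exact intervalIntegral.integral_hasDerivAt_right (hintg 0 x hs₀ hx)
      (hcontOn.stronglyMeasurableAtFilter isOpen_Iio x hx)
      (hcontOn.continuousAt (isOpen_Iio.mem_nhds hx))
  have hFmono : StrictMonoOn F (Set.Iio s₀) := by
    intro x hx y hy hxy
    have hpos : (0:ℝ) < ∫ u in x..y, (f u)⁻¹ := by
      apply intervalIntegral.intervalIntegral_pos_of_pos_on (hintg x y hx hy)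
      · intro u hu
        exact inv_pos.mpr (hfpos u (lt_trans hu.2 hy))
      · exact hxy
    have := hFadd x y hx hy
    linarith
  -- F on the nonpositive reals is linear
  have hf0 : f 0 = f 0 := rfl
  have hFneg : ∀ x ≤ 0, F x = x * (f 0)⁻¹ := by
    intro x hx
    have : F x = ∫ u in (0:ℝ)..x, (f 0)⁻¹ := by
      apply intervalIntegral.integral_congr
      intro u hu
      rw [Set.uIcc_of_ge hx] at hu
      have : max u 0 = 0 := max_eq_right hu.2
      simp only [hfdef, this, max_self]
    rw [this, intervalIntegral.integral_const, smul_eq_mul]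
    ring
  -- surjectivity of F : Iio s₀ → ℝ
  have hsurj : ∀ t : ℝ, ∃ c < s₀, F c = t := by
    intro t
    have hf0pos : 0 < f 0 := hfpos 0 hs₀
    -- lower point
    set x : ℝ := min (t * f 0) 0 with hxdef
    have hx0 : x ≤ 0 := min_le_right _ _
    have hFx : F x ≤ t := by
      rw [hFneg x hx0]
      have h1 : x ≤ t * f 0 := min_le_left _ _
      calc x * (f 0)⁻¹ ≤ t * f 0 * (f 0)⁻¹ := by
            apply mul_le_mul_of_nonneg_right h1 (inv_nonneg.mpr hf0pos.le)
        _ = t := by field_simp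
    -- upper point
    set Fa : ℝ := F a with hFadef
    set ε : ℝ := min (δ / 2) (δ * Real.exp (-(ζ * C) * (t - Fa + 1))) with hεdef
    have hεpos : 0 < ε := lt_min (by linarith) (by positivity)
    have hεlt : ε < δ := lt_of_le_of_lt (min_le_left _ _) (by linarith)
    set b : ℝ := s₀ - ε with hbdef
    have hblt : b < s₀ := by simp only [hbdef]; linarith
    have hab : a < b := by simp only [hadef, hbdef]; linarith
    have hFb : t ≤ F b := by
      have key : ∫ u in a..b, (ζ * C * (s₀ - u))⁻¹ ≤ ∫ u in a..b, (f u)⁻¹ := by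
        apply intervalIntegral.integral_mono_on hab.le
        · apply ContinuousOn.intervalIntegrable
          apply ContinuousOn.inv₀
          · fun_prop
          · intro u hu
            rw [Set.uIcc_of_le hab.le] at hu
            have h2 : (0:ℝ) < s₀ - u := by
              have : u < s₀ := lt_of_le_of_lt hu.2 hblt
              linarith
            positivity
        · exact hintg a b halt hblt
        · intro u hu
          have hus : u < s₀ := lt_of_le_of_lt hu.2 hblt
          have h1 : f u ≤ ζ * C * (s₀ - u) := hfub u ⟨hu.1, hus⟩
          exact inv_anti₀ (hfpos u hus) h1
      have hlog : ∫ u in a..b, (ζ * C * (s₀ - u))⁻¹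
          = (ζ * C)⁻¹ * Real.log (s₀ - a) - (ζ * C)⁻¹ * Real.log (s₀ - b) := by
        have hd : ∀ u ∈ Set.uIcc a b,
            HasDerivAt (fun v => -(ζ * C)⁻¹ * Real.log (s₀ - v)) (ζ * C * (s₀ - u))⁻¹ u := by
          intro u hu
          rw [Set.uIcc_of_le hab.le] at hu
          have hus : (0:ℝ) < s₀ - u := by
            have : u < s₀ := lt_of_le_of_lt hu.2 hblt; linarith
          have hinner : HasDerivAt (fun v : ℝ => s₀ - v) (-1) u := by
            simpa using (hasDerivAt_id u).const_sub s₀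
          have hlog := (Real.hasDerivAt_log hus.ne').comp u hinner
          have := hlog.const_mul (-(ζ * C)⁻¹)
          exact HasDerivAt.congr_deriv this (by simp only [mul_inv]; ring)
        have hint : IntervalIntegrable (fun u => (ζ * C * (s₀ - u))⁻¹) volume a b := by
          apply ContinuousOn.intervalIntegrable
          apply ContinuousOn.inv₀
          · fun_prop
          · intro u hu
            rw [Set.uIcc_of_le hab.le] at hu
            have h2 : (0:ℝ) < s₀ - u := by
              have : u < s₀ := lt_of_le_of_lt hu.2 hblt
              linarith
            positivity
        rw [intervalIntegral.integral_eq_sub_of_hasDerivAt hd hint]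
        ring
      have hsa : s₀ - a = δ := by simp only [hadef]; ring
      have hsb : s₀ - b = ε := by simp only [hbdef]; ring
      have hεle : ε ≤ δ * Real.exp (-(ζ * C) * (t - Fa + 1)) := min_le_right _ _
      have hlogε : Real.log ε ≤ Real.log δ - ζ * C * (t - Fa + 1) := by
        calc Real.log ε ≤ Real.log (δ * Real.exp (-(ζ * C) * (t - Fa + 1))) :=
              Real.log_le_log hεpos hεle
          _ = Real.log δ + (-(ζ * C) * (t - Fa + 1)) := by
              rw [Real.log_mul (by positivity) (Real.exp_pos _).ne', Real.log_exp]
          _ = Real.log δ - ζ * C * (t - Fa + 1) := by ring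
      have hzC : (0:ℝ) < ζ * C := by positivity
      have hge : (ζ * C)⁻¹ * Real.log (s₀ - a) - (ζ * C)⁻¹ * Real.log (s₀ - b)
          ≥ t - Fa + 1 := by
        rw [hsa, hsb]
        have h1 : Real.log δ - Real.log ε ≥ ζ * C * (t - Fa + 1) := by linarith
        calc (ζ * C)⁻¹ * Real.log δ - (ζ * C)⁻¹ * Real.log ε
            = (ζ * C)⁻¹ * (Real.log δ - Real.log ε) := by ring
          _ ≥ (ζ * C)⁻¹ * (ζ * C * (t - Fa + 1)) := by
              apply mul_le_mul_of_nonneg_left h1 (inv_nonneg.mpr hzC.le)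
          _ = t - Fa + 1 := by field_simp
      have hFbeq : F b = Fa + ∫ u in a..b, (f u)⁻¹ := hFadd a b halt hblt
      rw [hFbeq]
      have : (t - Fa + 1 : ℝ) ≤ ∫ u in a..b, (f u)⁻¹ := by
        calc (t - Fa + 1 : ℝ) ≤ ∫ u in a..b, (ζ * C * (s₀ - u))⁻¹ := by rw [hlog]; linarith [hge]
          _ ≤ _ := key
      linarith
    -- intermediate value
    have hxb : x ≤ b := le_trans hx0 (by linarith)
    have hFcont : ContinuousOn F (Set.Icc x b) := by
      intro u hu
      exact ((hFderiv u (lt_of_le_of_lt hu.2 hblt)).continuousAt).continuousWithinAt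
    have := intermediate_value_Icc hxb hFcont
    have ht : t ∈ Set.Icc (F x) (F b) := ⟨hFx, hFb⟩
    obtain ⟨c, hc, hFc⟩ := this ht
    exact ⟨c, lt_of_le_of_lt hc.2 hblt, hFc⟩
  -- build the order isomorphism
  set T : Set.Iio s₀ → ℝ := fun x => F x with hTdef
  have hTmono : StrictMono T := fun x y hxy => hFmono x.2 y.2 hxy
  have hTsurj : Function.Surjective T := by
    intro t
    obtain ⟨c, hc, hFc⟩ := hsurj t
    exact ⟨⟨c, hc⟩, hFc⟩
  set iso := StrictMono.orderIsoOfSurjective T hTmono hTsurj with hisodef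
  set s : ℝ → ℝ := fun t => ((iso.symm t : Set.Iio s₀) : ℝ) with hsdef
  have hFs : ∀ t : ℝ, F (s t) = t := fun t => iso.apply_symm_apply t
  have hslt : ∀ t : ℝ, s t < s₀ := fun t => (iso.symm t).2
  have hsinv : ∀ c : ℝ, c < s₀ → s (F c) = c := by
    intro c hc
    have : iso.symm (T ⟨c, hc⟩) = ⟨c, hc⟩ := iso.symm_apply_apply _
    simp only [hsdef]
    rw [show F c = T ⟨c, hc⟩ from rfl, this]
  have hF0 : F 0 = 0 := by simp [hFdef]
  have hs0 : s 0 = 0 := by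
    have := hsinv 0 hs₀
    rwa [hF0] at this
  have hsmono : Monotone s := by
    intro t₁ t₂ h
    exact Subtype.coe_le_coe.mpr (iso.symm.monotone h)
  have hsnonneg : ∀ t : ℝ, 0 ≤ t → 0 ≤ s t := by
    intro t ht
    have := hsmono ht
    rwa [hs0] at this
  -- continuity of s
  haveI : OrderTopology (Set.Iio s₀) := orderTopology_of_ordConnected
  have hscont : Continuous s := continuous_subtype_val.comp iso.symm.continuous
  refine ⟨s, hs0, ?_, fun t _ => hslt t, ?_⟩
  · intro t ht
    have hx : s t < s₀ := hslt t
    have hd : HasDerivAt F (f (s t))⁻¹ (s t) := hFderiv _ hx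
    have hne : (f (s t))⁻¹ ≠ 0 := inv_ne_zero (hfpos _ hx).ne'
    have := HasDerivAt.of_local_left_inverse (hscont.continuousAt) hd hne
      (Filter.Eventually.of_forall hFs)
    rw [inv_inv] at this
    have hmax : max (s t) 0 = s t := max_eq_left (hsnonneg t ht)
    simpa only [hfdef, hmax] using this
  · rw [tendsto_order]
    constructor
    · intro b' hb'
      set c : ℝ := (b' + s₀) / 2 with hcdef
      have hc1 : b' < c := by simp only [hcdef]; linarith
      have hc2 : c < s₀ := by simp only [hcdef]; linarith
      filter_upwards [Filter.eventually_ge_atTop (F c)] with t ht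
      have : c ≤ s t := by
        have := hsmono ht
        rwa [hsinv c hc2] at this
      linarith
    · intro b' hb'
      filter_upwards with t
      exact lt_trans (hslt t) hb'
end

section
/- For the qubit initial state |+⟩⟨+| driven along the geodesic (rotation about (0,−1,0) at angular speed ω_max = 2) under the attractor noise with pure attractor σ = |cos ψ |0⟩ + sin ψ |1⟩⟩⟨·| and ψ = π/8, the attractor lies on the noiseless trajectory, and the asymptotic extracted work equals 1/2 − sin²(π/8) = 1/(2√2) < 1/2 = ergotropy; hence the geodesic drive fails to extract the full ergotropy. -/
open Matrix Complex Real

lemma exp_sy_aux (θ : ℂ) :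
    NormedSpace.exp (θ • (!![0, -Complex.I; Complex.I, 0] : Matrix (Fin 2) (Fin 2) ℂ)) =
      !![Complex.cos (-Complex.I * θ), Complex.sin (-Complex.I * θ);
         -Complex.sin (-Complex.I * θ), Complex.cos (-Complex.I * θ)] := by
  set V : Matrix (Fin 2) (Fin 2) ℂ := !![1, 1; Complex.I, -Complex.I] with hVdef
  set W : Matrix (Fin 2) (Fin 2) ℂ := !![1/2, -Complex.I/2; 1/2, Complex.I/2] with hWdef
  have hVW : V * W = 1 := by
    ext i j
    fin_cases i <;> fin_cases j <;>
      simp [hVdef, hWdef, Matrix.mul_apply, Fin.sum_univ_two, Complex.ext_iff] <;>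
      (try refine ⟨?_, ?_⟩) <;> (first | trivial | ring)
  have hinv : V⁻¹ = W := Matrix.inv_eq_right_inv hVW
  have hdet : V.det = -2 * Complex.I := by
    rw [hVdef, Matrix.det_fin_two_of]; ring
  have hunit : IsUnit V := by
    rw [Matrix.isUnit_iff_isUnit_det, hdet, isUnit_iff_ne_zero]
    simp [Complex.ext_iff]
  have hdecomp : θ • (!![0, -Complex.I; Complex.I, 0] : Matrix (Fin 2) (Fin 2) ℂ) =
      V * Matrix.diagonal ![θ, -θ] * V⁻¹ := by
    rw [hinv]
    ext i j
    fin_cases i <;> fin_cases j <;>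
      simp [hVdef, hWdef, Matrix.mul_apply, Fin.sum_univ_two, Matrix.vecMul_diagonal,
        Matrix.diagonal_apply, Complex.ext_iff] <;>
      (try refine ⟨?_, ?_⟩) <;> (first | trivial | ring)
  have hpi : NormedSpace.exp (![θ, -θ] : Fin 2 → ℂ) = ![Complex.exp θ, Complex.exp (-θ)] := by
    funext i
    fin_cases i <;> simp [Pi.coe_exp, ← Complex.exp_eq_exp_ℂ]
  have hc : Complex.cos (-Complex.I * θ) = (Complex.exp θ + Complex.exp (-θ)) / 2 := by
    rw [Complex.cos]; ring_nf; rw [Complex.I_sq]; ring_nf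
  have hs : Complex.sin (-Complex.I * θ) =
      (Complex.exp θ - Complex.exp (-θ)) * (-Complex.I) / 2 := by
    rw [Complex.sin]; ring_nf; rw [Complex.I_sq]; ring_nf
  rw [hdecomp, Matrix.exp_conj V _ hunit, Matrix.exp_diagonal, hinv, hpi, hc, hs]
  ext i j
  fin_cases i <;> fin_cases j <;>
    simp [hVdef, hWdef, Matrix.mul_apply, Fin.sum_univ_two, Matrix.vecMul_diagonal,
      Matrix.diagonal_apply, Complex.ext_iff] <;>
    (try refine ⟨?_, ?_⟩) <;> (first | trivial | ring)

/-- For the initial state `|+⟩⟨+|` driven along the geodesic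
(rotation about `(0,−1,0)` at `ω_max = 2`, i.e. `U(t) = exp(itσ_y)`), the attractor
`σ = |cos(π/8)|0⟩ + sin(π/8)|1⟩⟩⟨·|` lies on the noiseless trajectory, and the work
extracted when the dynamics stalls at `σ` equals `1/2 − sin²(π/8) = 1/(2√2)`,
strictly less than the ergotropy `1/2`. -/
theorem geodesic_attractor_suboptimal
    (sy H ρ σm : Matrix (Fin 2) (Fin 2) ℂ) (ψ : Fin 2 → ℂ)
    (hsy : sy = !![0, -Complex.I; Complex.I, 0])
    (hH : H = !![0, 0; 0, 1])
    (hρ : ρ = !![1/2, 1/2; 1/2, 1/2])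
    (hψ : ψ = ![(Real.cos (π/8) : ℂ), (Real.sin (π/8) : ℂ)])
    (hσ : σm = vecMulVec ψ (star ψ))
    (U : ℝ → Matrix (Fin 2) (Fin 2) ℂ)
    (hU : ∀ t : ℝ, U t = NormedSpace.exp ((Complex.I * (t : ℂ)) • sy)) :
    (∃ t ∈ Set.Icc (0:ℝ) (π/4), U t * ρ * star (U t) = σm) ∧
    (ρ * H).trace - (σm * H).trace = ((1/(2 * Real.sqrt 2) : ℝ) : ℂ) ∧
    1/(2 * Real.sqrt 2) < (1/2 : ℝ) := by
  set c : ℝ := Real.cos (π/8) with hc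
  set s : ℝ := Real.sin (π/8) with hs
  -- trig facts
  have h2 : Real.sqrt 2 ^ 2 = 2 := Real.sq_sqrt (by norm_num)
  have hq : Real.sqrt 2 > 1 := by nlinarith [Real.sqrt_nonneg 2]
  have hcs : 2 * s * c = Real.sqrt 2 / 2 := by
    have := Real.sin_two_mul (π/8)
    have h4 : Real.sin (2 * (π/8)) = Real.sqrt 2 / 2 := by
      rw [show 2*(π/8) = π/4 by ring]; exact Real.sin_pi_div_four
    rw [h4] at this; linarith
  have hp : s ^ 2 + c ^ 2 = 1 := Real.sin_sq_add_cos_sq (π/8)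
  have hd : c ^ 2 - s ^ 2 = Real.sqrt 2 / 2 := by
    have := Real.cos_two_mul (π/8)
    have h4 : Real.cos (2 * (π/8)) = Real.sqrt 2 / 2 := by
      rw [show 2*(π/8) = π/4 by ring]; exact Real.cos_pi_div_four
    rw [h4] at this; nlinarith [hp]
  -- complex versions
  have hcsC : (2 : ℂ) * (s:ℂ) * (c:ℂ) = (Real.sqrt 2 : ℂ) / 2 := by exact_mod_cast hcs
  have hdC : (c:ℂ) ^ 2 - (s:ℂ) ^ 2 = (Real.sqrt 2 : ℂ) / 2 := by exact_mod_cast hd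
  have hpC : (s:ℂ) ^ 2 + (c:ℂ) ^ 2 = 1 := by exact_mod_cast hp
  refine ⟨⟨π/8, ⟨by positivity, by linarith [Real.pi_pos]⟩, ?_⟩, ?_, ?_⟩
  · -- trajectory hits σm
    have harg : -Complex.I * (Complex.I * ((π/8 : ℝ) : ℂ)) = ((π/8 : ℝ) : ℂ) := by
      linear_combination (-((π/8 : ℝ) : ℂ)) * Complex.I_sq
    have hUt : U (π/8) = !![(c:ℂ), (s:ℂ); -(s:ℂ), (c:ℂ)] := by
      rw [hU, hsy, exp_sy_aux, harg, hc, hs, Complex.ofReal_cos, Complex.ofReal_sin]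
    rw [hUt, hρ, hσ, hψ]
    ext i j
    fin_cases i <;> fin_cases j <;>
      simp [Matrix.mul_apply, Fin.sum_univ_two, Matrix.vecMulVec_apply, Matrix.star_apply,
        Matrix.conjTranspose_apply, Complex.conj_ofReal]
    · linear_combination (-1/2 : ℂ) * hdC + (1/2 : ℂ) * hcsC
    · linear_combination (1/2 : ℂ) * hdC - (1/2 : ℂ) * hcsC
    · linear_combination (1/2 : ℂ) * hdC - (1/2 : ℂ) * hcsC
    · linear_combination (1/2 : ℂ) * hdC - (1/2 : ℂ) * hcsC
  · -- work value
    have hreal : 1/2 - s * s = 1/(2 * Real.sqrt 2) := by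
      rw [eq_div_iff (by positivity)]
      nlinarith [hd, hp, h2]
    rw [hρ, hσ, hψ, hH]
    have : ((vecMulVec ![(c:ℂ), (s:ℂ)] (star ![(c:ℂ), (s:ℂ)]) * !![0, 0; 0, 1]).trace) =
        (s:ℂ) * (s:ℂ) := by
      simp [-Matrix.cons_vecMulVec, Matrix.trace_fin_two, Matrix.mul_apply, Fin.sum_univ_two, Matrix.vecMulVec_apply,
        Complex.conj_ofReal]
    rw [this]
    have h12 : ((!![1/2, 1/2; 1/2, 1/2] : Matrix (Fin 2) (Fin 2) ℂ) * !![0, 0; 0, 1]).trace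
        = 1/2 := by
      simp [Matrix.trace_fin_two, Matrix.mul_apply, Fin.sum_univ_two]
    rw [h12]
    rw [show ((1:ℂ)/2 - (s:ℂ)*(s:ℂ)) = ((1/2 - s*s : ℝ) : ℂ) by push_cast; ring, hreal]
  · rw [div_lt_div_iff₀ (by positivity) (by norm_num)]
    nlinarith
end
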